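/- Let ∂ be a ℤ-linear map from chains on S to chains on T such that for every t ∈ T the set { s ∈ S : t lies in the support of ∂δ_s } is finite. Then for every s₀ ∈ S and every n ∈ ℕ, the set of connected chains A with ‖A‖ ≤ n whose support contains s₀ is finite. -/
import Mathlib


/-- The volume of a chain `A : S →₀ ℤ`: the sum of the absolute values of its
coefficients. -/
def vol {S : Type*} (A : S →₀ ℤ) : ℕ := ∑ s ∈ A.support, (A s).natAbs

/-- `B` is a subchain of `A` when `‖A‖ = ‖B‖ + ‖A - B‖`. -/
def Subchain {S : Type*} (B A : S →₀ ℤ) : Prop := vol A = vol B + vol (A - B)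

/-- Given a boundary map `d`, `B` is a component of `A` if `B` is a subchain of `A`
and `d B` is a subchain of `d A`. -/
def Component {S T : Type*} (d : (S →₀ ℤ) →ₗ[ℤ] (T →₀ ℤ)) (B A : S →₀ ℤ) : Prop :=
  Subchain B A ∧ Subchain (d B) (d A)

/-- A chain is connected if its only components are `0` and itself. -/
def Connected {S T : Type*} (d : (S →₀ ℤ) →ₗ[ℤ] (T →₀ ℤ)) (A : S →₀ ℤ) : Prop :=
  ∀ B : S →₀ ℤ, Component d B A → B = 0 ∨ B = A

section Aux

open Classical in
noncomputable instance : ∀ (p : Prop), Decidable p := fun p => Classical.propDecidable p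

variable {S T : Type*} (d : (S →₀ ℤ) →ₗ[ℤ] (T →₀ ℤ))

/-- The support of the boundary of a single cell. -/
noncomputable def bsupp (s : S) : Finset T := (d (Finsupp.single s 1)).support

/-- Two cells are adjacent if their boundaries share a cell. -/
def Adjc (s s' : S) : Prop := ∃ t, t ∈ bsupp d s ∧ t ∈ bsupp d s'

lemma vol_eq_sum (A : S →₀ ℤ) {F : Finset S} (h : A.support ⊆ F) :
    vol A = ∑ s ∈ F, (A s).natAbs := by
  unfold vol
  exact Finset.sum_subset h (fun s _ hs => by
    simp [Finsupp.notMem_support_iff.mp hs])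

lemma card_support_le_vol (A : S →₀ ℤ) : A.support.card ≤ vol A := by
  unfold vol
  rw [Finset.card_eq_sum_ones]
  refine Finset.sum_le_sum (fun s hs => ?_)
  have := Finsupp.mem_support_iff.mp hs
  omega

lemma natAbs_le_vol (A : S →₀ ℤ) (s : S) : (A s).natAbs ≤ vol A := by
  by_cases hs : s ∈ A.support
  · exact Finset.single_le_sum (f := fun s => (A s).natAbs) (fun _ _ => Nat.zero_le _) hs
  · simp [Finsupp.notMem_support_iff.mp hs]

lemma subchain_iff {B A : S →₀ ℤ} :
    Subchain B A ↔ ∀ s, (A s).natAbs = (B s).natAbs + (A s - B s).natAbs := by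
  set F := A.support ∪ B.support ∪ (A - B).support with hF
  have hA : A.support ⊆ F := by intro s hs; simp [hF, hs]
  have hB : B.support ⊆ F := by intro s hs; simp [hF, hs]
  have hAB : (A - B).support ⊆ F := by intro s hs; simp [hF, hs]
  have tri : ∀ s : S, (A s).natAbs ≤ (B s).natAbs + (A s - B s).natAbs := by
    intro s
    have : A s = B s + (A s - B s) := by ring
    calc (A s).natAbs = (B s + (A s - B s)).natAbs := by rw [← this]
      _ ≤ (B s).natAbs + (A s - B s).natAbs := Int.natAbs_add_le _ _
  constructor
  · intro h s
    unfold Subchain at h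
    rw [vol_eq_sum A hA, vol_eq_sum B hB, vol_eq_sum (A - B) hAB,
      ← Finset.sum_add_distrib] at h
    have hsub : ∀ s, (A - B) s = A s - B s := fun s => by simp
    by_cases hs : s ∈ F
    · have := (Finset.sum_eq_sum_iff_of_le (fun i _ => by
        rw [hsub i]; exact tri i)).mp h s hs
      rw [hsub s] at this
      exact this
    · have h1 : A s = 0 := Finsupp.notMem_support_iff.mp (fun c => hs (hA c))
      have h2 : B s = 0 := Finsupp.notMem_support_iff.mp (fun c => hs (hB c))
      simp [h1, h2]
  · intro h
    unfold Subchain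
    rw [vol_eq_sum A hA, vol_eq_sum B hB, vol_eq_sum (A - B) hAB,
      ← Finset.sum_add_distrib]
    refine Finset.sum_congr rfl (fun s _ => ?_)
    have := h s
    simp only [Finsupp.sub_apply]
    omega

lemma support_d_subset (A : S →₀ ℤ) :
    (d A).support ⊆ A.support.biUnion (bsupp d) := by
  have hA : d A = A.sum fun s c => c • d (Finsupp.single s 1) := by
    conv_lhs => rw [← Finsupp.sum_single A]
    rw [map_finsuppSum]
    refine Finsupp.sum_congr (fun s _ => ?_)
    rw [← map_zsmul]
    congr 1
    rw [Finsupp.smul_single]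
    simp
  rw [hA]
  refine (Finsupp.support_sum).trans ?_
  refine Finset.biUnion_subset.mpr (fun s hs => ?_)
  refine Finset.Subset.trans (Finsupp.support_smul) ?_
  exact Finset.subset_biUnion_of_mem (bsupp d) hs

/-- Restricting a chain to a set of cells closed under adjacency (within the support)
gives a component. -/
lemma restrict_component (A : S →₀ ℤ) (C : Finset S)
    (hclosed : ∀ s ∈ C, ∀ s' ∈ A.support, Adjc d s s' → s' ∈ C) :
    Component d (A.filter (· ∈ C)) A := by
  set B := A.filter (· ∈ C) with hBdef
  have hBapp : ∀ s, B s = if s ∈ C then A s else 0 := fun s => Finsupp.filter_apply _ _ _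
  constructor
  · rw [subchain_iff]
    intro s
    rw [hBapp s]
    by_cases hs : s ∈ C <;> simp [hs]
  · rw [subchain_iff]
    have hdA : d A = d B + d (A - B) := by
      rw [← map_add]; congr 1; abel
    -- supports of d B and d (A - B) are disjoint
    have hBsupp : B.support ⊆ A.support ∩ C := by
      intro s hs
      have h1 := Finsupp.mem_support_iff.mp hs
      rw [hBapp s] at h1
      by_cases hc : s ∈ C
      · simp only [hc, if_true] at h1
        exact Finset.mem_inter.mpr ⟨Finsupp.mem_support_iff.mpr h1, hc⟩
      · simp [hc] at h1
    have hABsupp : (A - B).support ⊆ A.support \ C := by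
      intro s hs
      have h1 := Finsupp.mem_support_iff.mp hs
      simp only [Finsupp.sub_apply] at h1
      rw [hBapp s] at h1
      by_cases hc : s ∈ C
      · simp [hc] at h1
      · simp only [hc, if_false, sub_zero] at h1
        exact Finset.mem_sdiff.mpr ⟨Finsupp.mem_support_iff.mpr h1, hc⟩
    have hdisj : ∀ t : T, t ∈ (d B).support → t ∈ (d (A - B)).support → False := by
      intro t h1 h2
      obtain ⟨s, hs, hts⟩ := Finset.mem_biUnion.mp (support_d_subset d B h1)
      obtain ⟨s', hs', hts'⟩ := Finset.mem_biUnion.mp (support_d_subset d (A - B) h2)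
      have hsC : s ∈ C := (Finset.mem_inter.mp (hBsupp hs)).2
      have hs'A : s' ∈ A.support := (Finset.mem_sdiff.mp (hABsupp hs')).1
      have hs'C : s' ∉ C := (Finset.mem_sdiff.mp (hABsupp hs')).2
      exact hs'C (hclosed s hsC s' hs'A ⟨t, hts, hts'⟩)
    intro t
    have happ : d A t = d B t + d (A - B) t := by rw [hdA]; simp
    have hsub : d A t - d B t = d (A - B) t := by omega
    rw [hsub]
    by_cases h1 : d B t = 0
    · rw [h1, zero_add] at happ
      rw [h1, happ]
      simp
    · have h2 : d (A - B) t = 0 := by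
        by_contra h2
        exact hdisj t (Finsupp.mem_support_iff.mpr h1) (Finsupp.mem_support_iff.mpr h2)
      rw [h2, add_zero] at happ
      rw [h2, happ]
      simp

/-- Balls in the adjacency graph. -/
def ballS (s₀ : S) : ℕ → Set S
  | 0 => {s₀}
  | k + 1 => ballS s₀ k ∪ {s' | ∃ s ∈ ballS s₀ k, Adjc d s s'}

lemma ballS_finite
    (hloc : ∀ t : T, {s : S | t ∈ (d (Finsupp.single s 1)).support}.Finite)
    (s₀ : S) : ∀ k, (ballS d s₀ k).Finite := by
  intro k
  induction k with
  | zero => exact Set.finite_singleton s₀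
  | succ k ih =>
    refine ih.union ?_
    have : {s' | ∃ s ∈ ballS d s₀ k, Adjc d s s'} ⊆
        ⋃ s ∈ ballS d s₀ k, ⋃ t ∈ bsupp d s, {s' : S | t ∈ bsupp d s'} := by
      rintro s' ⟨s, hs, t, ht, ht'⟩
      simp only [Set.mem_iUnion]
      exact ⟨s, hs, t, ht, ht'⟩
    refine Set.Finite.subset ?_ this
    refine Set.Finite.biUnion ih (fun s _ => ?_)
    exact Set.Finite.biUnion (bsupp d s).finite_toSet (fun t _ => hloc t)

lemma ballS_mono (s₀ : S) : ∀ {j k : ℕ}, j ≤ k → ballS d s₀ j ⊆ ballS d s₀ k := by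
  intro j k h
  induction k with
  | zero => rw [Nat.le_zero.mp h]
  | succ k ih =>
    rcases Nat.lt_or_ge j (k + 1) with h' | h'
    · exact (ih (Nat.lt_succ_iff.mp h')).trans (Set.subset_union_left)
    · rw [Nat.le_antisymm h h']

lemma self_mem_ballS (s₀ : S) (k : ℕ) : s₀ ∈ ballS d s₀ k :=
  ballS_mono d s₀ (Nat.zero_le k) rfl

/-- The support of a connected chain through `s₀` of volume at most `n` is contained
in the ball of radius `n` around `s₀`. -/
lemma supp_subset_ball (A : S →₀ ℤ) (hA : Connected d A) {s₀ : S}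
    (hs₀ : s₀ ∈ A.support) {n : ℕ} (hvol : vol A ≤ n) :
    ↑A.support ⊆ ballS d s₀ n := by
  set Cf : ℕ → Finset S := fun k => A.support.filter (fun s => s ∈ ballS d s₀ k) with hCf
  have hCmono : ∀ k, Cf k ⊆ Cf (k + 1) := by
    intro k s hs
    rw [hCf, Finset.mem_filter] at hs ⊢
    exact ⟨hs.1, ballS_mono d s₀ (Nat.le_succ k) hs.2⟩
  have hCcard : ∀ k, k + 1 ≤ (Cf k).card ∨ ∃ j ≤ k, Cf j = Cf (j + 1) := by
    intro k
    induction k with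
    | zero =>
      left
      have : s₀ ∈ Cf 0 := by
        rw [hCf, Finset.mem_filter]
        exact ⟨hs₀, rfl⟩
      exact Finset.card_pos.mpr ⟨s₀, this⟩
    | succ k ih =>
      rcases ih with h | ⟨j, hj, hfix⟩
      · by_cases heq : Cf k = Cf (k + 1)
        · exact Or.inr ⟨k, Nat.le_succ k, heq⟩
        · left
          have hlt : (Cf k).card < (Cf (k + 1)).card :=
            Finset.card_lt_card (Finset.ssubset_iff_subset_ne.mpr ⟨hCmono k, heq⟩)
          omega
      · exact Or.inr ⟨j, hj.trans (Nat.le_succ k), hfix⟩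
  have hsupcard : A.support.card ≤ n := (card_support_le_vol A).trans hvol
  have hCsub : ∀ k, Cf k ⊆ A.support := fun k => Finset.filter_subset _ _
  -- find a fixed point k ≤ n
  obtain ⟨k, hk, hfix⟩ : ∃ k ≤ n, Cf k = Cf (k + 1) := by
    rcases hCcard n with h | h
    · exfalso
      have := Finset.card_le_card (hCsub n)
      omega
    · exact h
  -- Cf k is closed under adjacency within the support
  have hclosed : ∀ s ∈ Cf k, ∀ s' ∈ A.support, Adjc d s s' → s' ∈ Cf k := by
    intro s hs s' hs' hadj
    rw [hfix, hCf, Finset.mem_filter]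
    refine ⟨hs', Or.inr ⟨s, ?_, hadj⟩⟩
    rw [hCf, Finset.mem_filter] at hs
    exact hs.2
  have hcomp := restrict_component d A (Cf k) hclosed
  rcases hA _ hcomp with h0 | hAA
  · exfalso
    have : (A.filter (· ∈ Cf k)) s₀ = A s₀ := by
      rw [Finsupp.filter_apply]
      have : s₀ ∈ Cf k := by
        rw [hCf, Finset.mem_filter]
        exact ⟨hs₀, self_mem_ballS d s₀ k⟩
      simp [this]
    rw [h0] at this
    exact Finsupp.mem_support_iff.mp hs₀ this.symm
  · intro s hs
    have hs' : s ∈ A.support := hs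
    have : A s ≠ 0 := Finsupp.mem_support_iff.mp hs'
    have hfil : (A.filter (· ∈ Cf k)) s = A s := by rw [hAA]
    rw [Finsupp.filter_apply] at hfil
    by_cases hc : s ∈ Cf k
    · rw [hCf, Finset.mem_filter] at hc
      exact ballS_mono d s₀ hk hc.2
    · simp [hc] at hfil
      exact absurd hfil.symm this
  
/-- Chains with support in a fixed finite set and bounded coefficients form a
finite set. -/
lemma bounded_chains_finite {F : Set S} (hF : F.Finite) (n : ℕ) :
    {A : S →₀ ℤ | ↑A.support ⊆ F ∧ vol A ≤ n}.Finite := by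
  rw [Set.finite_coe_iff.symm]
  have : ∀ A : {A : S →₀ ℤ | ↑A.support ⊆ F ∧ vol A ≤ n},
      ∀ s : hF.toFinset, (A : S →₀ ℤ) s ∈ Finset.Icc (-(n : ℤ)) n := by
    rintro ⟨A, hA1, hA2⟩ s
    have := natAbs_le_vol A s
    simp only [Finset.mem_Icc]
    omega
  let f : {A : S →₀ ℤ | ↑A.support ⊆ F ∧ vol A ≤ n} →
      (hF.toFinset → Finset.Icc (-(n : ℤ)) n) :=
    fun A s => ⟨(A : S →₀ ℤ) s, this A s⟩
  have hinj : Function.Injective f := by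
    rintro ⟨A, hA1, hA2⟩ ⟨A', hA'1, hA'2⟩ h
    ext1
    ext s
    by_cases hs : s ∈ hF.toFinset
    · have := congrFun h ⟨s, hs⟩
      simpa [f] using this
    · have h1 : A s = 0 := by
        rw [← Finsupp.notMem_support_iff]
        intro hc
        exact hs (hF.mem_toFinset.mpr (hA1 hc))
      have h2 : A' s = 0 := by
        rw [← Finsupp.notMem_support_iff]
        intro hc
        exact hs (hF.mem_toFinset.mpr (hA'1 hc))
      rw [h1, h2]
  exact Finite.of_injective f hinj

end Aux

/-- If the boundary map is locally finite (each `(q-1)`-cell `t` bounds only finitely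
many cells of `S`), then there are only finitely many connected chains of volume at
most `n` whose support contains a given cell `s₀`. -/
theorem connected_chains_through_cell_finite {S T : Type*}
    (d : (S →₀ ℤ) →ₗ[ℤ] (T →₀ ℤ))
    (hloc : ∀ t : T, {s : S | t ∈ (d (Finsupp.single s 1)).support}.Finite)
    (s₀ : S) (n : ℕ) :
    {A : S →₀ ℤ | Connected d A ∧ vol A ≤ n ∧ s₀ ∈ A.support}.Finite := by
  refine Set.Finite.subset (bounded_chains_finite (ballS_finite d hloc s₀ n) n) ?_
  rintro A ⟨hconn, hvol, hs₀⟩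
  exact ⟨supp_subset_ball d A hconn hs₀ hvol, hvol⟩
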